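/- Let $\kappa > 1$, $p > 0$, $\bar{\beta} > 0$, $\bar{q} = (\bar{q}_1,\bar{q}_2) \in \mathbb{R}^2$ with $\bar{q}_1, \bar{q}_2 > 0$, and set $c_1 = -\frac{\bar{q}_1}{\kappa - 1}$, $c_2 = \frac{\kappa\, \bar{q}_2}{\kappa - 1}$. Define $H(z) = (\kappa z_1^2 + z_2^2)^{p/2} + \frac{\bar{\beta}}{2}\|z - \bar{q}\|_2^2$ for $z \in \mathbb{R}^2$. Then every global minimiser $z^*$ of $H$ over $\mathbb{R}^2$ belongs to the arc of hyperbola $\mathcal{H}_1 = \mathcal{H} \cap ([0, \bar{q}_1] \times [0, \bar{q}_2])$, where $\mathcal{H} = \{z \in \mathbb{R}^2 : (z_1 - c_1)(z_2 - c_2) = c_1 c_2\}$. -/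
import Mathlib


/-- Every global minimiser `z*` of
`H(z) = (κz₁² + z₂²)^{p/2} + β̄/2 ‖z - q̄‖₂²` over `ℝ²` belongs to the arc of
hyperbola `H₁ = H ∩ ([0,q̄₁] × [0,q̄₂])`, where
`H = {z : (z₁-c₁)(z₂-c₂) = c₁c₂}`, `c₁ = -q̄₁/(κ-1)`, `c₂ = κq̄₂/(κ-1)`. -/
theorem stmt8 (κ p β q1 q2 : ℝ) (hκ : 1 < κ) (hp : 0 < p) (hβ : 0 < β)
    (hq1 : 0 < q1) (hq2 : 0 < q2) :
    let c1 : ℝ := -q1 / (κ - 1)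
    let c2 : ℝ := κ * q2 / (κ - 1)
    let H : ℝ × ℝ → ℝ := fun z =>
      (κ * z.1 ^ 2 + z.2 ^ 2) ^ (p / 2) + β / 2 * ((z.1 - q1) ^ 2 + (z.2 - q2) ^ 2)
    ∀ zstar : ℝ × ℝ, (∀ z : ℝ × ℝ, H zstar ≤ H z) →
      (zstar.1 - c1) * (zstar.2 - c2) = c1 * c2 ∧
      zstar.1 ∈ Set.Icc 0 q1 ∧ zstar.2 ∈ Set.Icc 0 q2 := by
  intro c1 c2 H zstar hmin
  have hκ0 : (0:ℝ) < κ := by linarith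
  have hκ1 : κ - 1 ≠ 0 := by intro h; linarith [sub_eq_zero.mp h]
  obtain ⟨z1, z2⟩ := zstar
  simp only [H] at hmin
  -- box bounds
  have hz1nn : 0 ≤ z1 := by
    by_contra hneg
    push_neg at hneg
    have := hmin (-z1, z2)
    simp only at this
    have hb : κ * (-z1) ^ 2 + z2 ^ 2 = κ * z1 ^ 2 + z2 ^ 2 := by ring
    rw [hb] at this
    nlinarith [this, mul_pos (mul_pos hβ hq1) (neg_pos.mpr hneg)]
  have hz2nn : 0 ≤ z2 := by
    by_contra hneg
    push_neg at hneg
    have := hmin (z1, -z2)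
    simp only at this
    have hb : κ * z1 ^ 2 + (-z2) ^ 2 = κ * z1 ^ 2 + z2 ^ 2 := by ring
    rw [hb] at this
    nlinarith [this, mul_pos (mul_pos hβ hq2) (neg_pos.mpr hneg)]
  have hz1le : z1 ≤ q1 := by
    by_contra hgt
    push_neg at hgt
    have := hmin (q1, z2)
    simp only at this
    have hpow : (κ * q1 ^ 2 + z2 ^ 2) ^ (p / 2) ≤ (κ * z1 ^ 2 + z2 ^ 2) ^ (p / 2) := by
      apply Real.rpow_le_rpow (by positivity)
        (by nlinarith [mul_pos hκ0 (mul_pos (sub_pos.mpr hgt) (show (0:ℝ) < z1 + q1 by linarith))])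
        (by positivity)
    nlinarith [this, hpow, mul_pos hβ (pow_pos (sub_pos.mpr hgt) 2)]
  have hz2le : z2 ≤ q2 := by
    by_contra hgt
    push_neg at hgt
    have := hmin (z1, q2)
    simp only at this
    have hpow : (κ * z1 ^ 2 + q2 ^ 2) ^ (p / 2) ≤ (κ * z1 ^ 2 + z2 ^ 2) ^ (p / 2) := by
      apply Real.rpow_le_rpow (by positivity)
        (by nlinarith [mul_pos (sub_pos.mpr hgt) (show (0:ℝ) < z2 + q2 by linarith)])
        (by positivity)
    nlinarith [this, hpow, mul_pos hβ (pow_pos (sub_pos.mpr hgt) 2)]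
  refine ⟨?_, ⟨hz1nn, hz1le⟩, ⟨hz2nn, hz2le⟩⟩
  -- hyperbola equation
  by_cases hzero : z1 = 0 ∧ z2 = 0
  · obtain ⟨h1, h2⟩ := hzero
    simp only [h1, h2, c1, c2]
    ring
  · have hbase : 0 < κ * z1 ^ 2 + z2 ^ 2 := by
      rcases (not_and_or.mp hzero) with h | h
      · have : z1 ≠ 0 := h
        nlinarith [sq_pos_of_ne_zero this, sq_nonneg z2]
      · have : z2 ≠ 0 := h
        nlinarith [sq_pos_of_ne_zero this, sq_nonneg z1]
    set base : ℝ := κ * z1 ^ 2 + z2 ^ 2 with hbdef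
    have hLpos : 0 < p / 2 * base ^ (p / 2 - 1) := by
      apply mul_pos (by linarith)
      exact Real.rpow_pos_of_pos hbase _
    -- first-order condition in coordinate 1
    have foc1 : κ * (2 * z1) * (p / 2) * base ^ (p / 2 - 1) + β / 2 * (2 * (z1 - q1)) = 0 := by
      have hd1 : HasDerivAt (fun t : ℝ => κ * t ^ 2 + z2 ^ 2) (κ * (2 * z1)) z1 := by
        have := ((hasDerivAt_pow 2 z1).const_mul κ).add_const (z2 ^ 2)
        simpa [mul_comm] using this
      have hd2 : HasDerivAt (fun t : ℝ => (κ * t ^ 2 + z2 ^ 2) ^ (p / 2))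
          (κ * (2 * z1) * (p / 2) * base ^ (p / 2 - 1)) z1 :=
        hd1.rpow_const (Or.inl (ne_of_gt hbase))
      have hd3 : HasDerivAt (fun t : ℝ => β / 2 * ((t - q1) ^ 2 + (z2 - q2) ^ 2))
          (β / 2 * (2 * (z1 - q1))) z1 := by
        have h4 : HasDerivAt (fun t : ℝ => (t - q1) ^ 2 + (z2 - q2) ^ 2)
            (2 * (z1 - q1)) z1 := by
          have := (((hasDerivAt_id z1).sub_const q1).pow 2).add_const ((z2 - q2) ^ 2)
          simpa using this
        simpa using h4.const_mul (β / 2)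
      have hd : HasDerivAt (fun t : ℝ =>
          (κ * t ^ 2 + z2 ^ 2) ^ (p / 2) + β / 2 * ((t - q1) ^ 2 + (z2 - q2) ^ 2))
          (κ * (2 * z1) * (p / 2) * base ^ (p / 2 - 1) + β / 2 * (2 * (z1 - q1))) z1 := hd2.add hd3
      have hlocal : IsLocalMin (fun t : ℝ =>
          (κ * t ^ 2 + z2 ^ 2) ^ (p / 2) + β / 2 * ((t - q1) ^ 2 + (z2 - q2) ^ 2)) z1 := by
        apply Filter.Eventually.of_forall
        intro t
        exact hmin (t, z2)
      exact hlocal.hasDerivAt_eq_zero hd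
    -- first-order condition in coordinate 2
    have foc2 : 2 * z2 * (p / 2) * base ^ (p / 2 - 1) + β / 2 * (2 * (z2 - q2)) = 0 := by
      have hd1 : HasDerivAt (fun t : ℝ => κ * z1 ^ 2 + t ^ 2) (2 * z2) z2 := by
        have := (hasDerivAt_pow 2 z2).const_add (κ * z1 ^ 2)
        simpa [mul_comm] using this
      have hd2 : HasDerivAt (fun t : ℝ => (κ * z1 ^ 2 + t ^ 2) ^ (p / 2))
          (2 * z2 * (p / 2) * base ^ (p / 2 - 1)) z2 :=
        hd1.rpow_const (Or.inl (ne_of_gt hbase))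
      have hd3 : HasDerivAt (fun t : ℝ => β / 2 * ((z1 - q1) ^ 2 + (t - q2) ^ 2))
          (β / 2 * (2 * (z2 - q2))) z2 := by
        have h4 : HasDerivAt (fun t : ℝ => (z1 - q1) ^ 2 + (t - q2) ^ 2)
            (2 * (z2 - q2)) z2 := by
          have := ((((hasDerivAt_id z2).sub_const q2).pow 2)).const_add ((z1 - q1) ^ 2)
          simpa using this
        simpa using h4.const_mul (β / 2)
      have hd : HasDerivAt (fun t : ℝ =>
          (κ * z1 ^ 2 + t ^ 2) ^ (p / 2) + β / 2 * ((z1 - q1) ^ 2 + (t - q2) ^ 2))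
          (2 * z2 * (p / 2) * base ^ (p / 2 - 1) + β / 2 * (2 * (z2 - q2))) z2 := hd2.add hd3
      have hlocal : IsLocalMin (fun t : ℝ =>
          (κ * z1 ^ 2 + t ^ 2) ^ (p / 2) + β / 2 * ((z1 - q1) ^ 2 + (t - q2) ^ 2)) z2 := by
        apply Filter.Eventually.of_forall
        intro t
        exact hmin (z1, t)
      exact hlocal.hasDerivAt_eq_zero hd
    have key : (p / 2 * base ^ (p / 2 - 1)) * (2 * (κ * z1 * (z2 - q2) - z2 * (z1 - q1))) = 0 := by
      linear_combination (z2 - q2) * foc1 - (z1 - q1) * foc2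
    have key2 : κ * z1 * (z2 - q2) - z2 * (z1 - q1) = 0 := by
      have := (mul_eq_zero.mp key).resolve_left (ne_of_gt hLpos)
      linarith
    show (z1 - c1) * (z2 - c2) = c1 * c2
    simp only [c1, c2]
    field_simp
    ring_nf
    nlinarith [key2, sq_nonneg (κ - 1)]
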